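/- The mutation map ℳ_H is non-decreasing with respect to the Hamming class: for all b, c ∈ {0,…,ℓ} and all u_1,…,u_ℓ ∈ [0,1], if b ≤ c then ℳ_H(b, u_1,…,u_ℓ) ≤ ℳ_H(c, u_1,…,u_ℓ). -/

import Mathlib

open Finset

noncomputable section

/-- The mutation map `ℳ_H`. -/
def calMH (ℓ κ : ℕ) (p : ℝ) (b : ℕ) (u : Fin ℓ → ℝ) : ℕ :=
  b - (Finset.univ.filter (fun k : Fin ℓ => (k : ℕ) < b ∧ u k < p / (κ : ℝ))).card
    + (Finset.univ.filter
        (fun k : Fin ℓ => b ≤ (k : ℕ) ∧ 1 - p * (1 - 1 / (κ : ℝ)) < u k)).card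

theorem calMH_monotone
    (ℓ κ : ℕ) (hℓ : 1 ≤ ℓ) (hκ : 2 ≤ κ)
    (p : ℝ) (hp : 0 < p ∧ p < 1)
    (b c : ℕ) (hb : b ≤ ℓ) (hc : c ≤ ℓ) (hbc : b ≤ c)
    (u : Fin ℓ → ℝ) (hu : ∀ k, 0 ≤ u k ∧ u k ≤ 1) :
    calMH ℓ κ p b u ≤ calMH ℓ κ p c u := by
  obtain ⟨hp0, hp1⟩ := hp
  have hκ0 : (0:ℝ) < (κ:ℝ) := by exact_mod_cast lt_of_lt_of_le two_pos (by exact_mod_cast hκ)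
  set low : Fin ℓ → Prop := fun k => u k < p / (κ : ℝ) with hlow
  set high : Fin ℓ → Prop := fun k => 1 - p * (1 - 1 / (κ : ℝ)) < u k with hhigh
  classical
  set A := Finset.univ.filter (fun k : Fin ℓ => (k : ℕ) < b ∧ low k) with hA
  set A' := Finset.univ.filter (fun k : Fin ℓ => (k : ℕ) < c ∧ low k) with hA'
  set B := Finset.univ.filter (fun k : Fin ℓ => b ≤ (k : ℕ) ∧ high k) with hB
  set B' := Finset.univ.filter (fun k : Fin ℓ => c ≤ (k : ℕ) ∧ high k) with hB'
  set ML := Finset.univ.filter (fun k : Fin ℓ => b ≤ (k : ℕ) ∧ (k : ℕ) < c ∧ low k) with hML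
  set MH := Finset.univ.filter (fun k : Fin ℓ => b ≤ (k : ℕ) ∧ (k : ℕ) < c ∧ high k) with hMH
  -- low and high are mutually exclusive
  have hex : ∀ k, ¬ (low k ∧ high k) := by
    intro k hk
    simp only [hlow, hhigh] at hk
    obtain ⟨h1, h2⟩ := hk
    have e : p * (1 - 1/(κ:ℝ)) = p - p/(κ:ℝ) := by
      rw [mul_sub, mul_one, mul_one_div]
    linarith
  have hAb : A.card ≤ b := by
    have h1 : A.card ≤ (Finset.range b).card := by
      apply Finset.card_le_card_of_injOn (fun k : Fin ℓ => (k:ℕ))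
      · intro k hk
        rw [hA, Finset.mem_coe, Finset.mem_filter] at hk
        exact Finset.mem_range.mpr hk.2.1
      · exact fun x _ y _ h => Fin.val_injective h
    simpa using h1
  have hA'eq : A'.card = A.card + ML.card := by
    have hAe : A' = A ∪ ML := by
      ext k
      simp only [hA, hA', hML, Finset.mem_union, Finset.mem_filter, Finset.mem_univ, true_and]
      constructor
      · rintro ⟨hkc, hl⟩
        rcases lt_or_ge (k:ℕ) b with h | h
        · exact Or.inl ⟨h, hl⟩
        · exact Or.inr ⟨h, hkc, hl⟩
      · rintro (⟨h, hl⟩ | ⟨_, h2, hl⟩)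
        · exact ⟨lt_of_lt_of_le h hbc, hl⟩
        · exact ⟨h2, hl⟩
    have hdisj : Disjoint A ML := by
      rw [Finset.disjoint_left]
      intro k hk hk'
      simp only [hA, hML, Finset.mem_filter, Finset.mem_univ, true_and] at hk hk'
      omega
    rw [hAe, Finset.card_union_of_disjoint hdisj]
  have hBeq : B.card = B'.card + MH.card := by
    have hBe : B = B' ∪ MH := by
      ext k
      simp only [hB, hB', hMH, Finset.mem_union, Finset.mem_filter, Finset.mem_univ, true_and]
      constructor
      · rintro ⟨hkb, hh⟩
        rcases lt_or_ge (k:ℕ) c with h | h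
        · exact Or.inr ⟨hkb, h, hh⟩
        · exact Or.inl ⟨h, hh⟩
      · rintro (⟨h, hh⟩ | ⟨h1, _, hh⟩)
        · exact ⟨le_trans hbc h, hh⟩
        · exact ⟨h1, hh⟩
    have hdisj : Disjoint B' MH := by
      rw [Finset.disjoint_left]
      intro k hk hk'
      simp only [hB', hMH, Finset.mem_filter, Finset.mem_univ, true_and] at hk hk'
      omega
    rw [hBe, Finset.card_union_of_disjoint hdisj]
  have hM : ML.card + MH.card ≤ c - b := by
    have hdisj : Disjoint ML MH := by
      rw [Finset.disjoint_left]
      intro k hk hk'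
      simp only [hML, hMH, Finset.mem_filter, Finset.mem_univ, true_and] at hk hk'
      exact hex k ⟨hk.2.2, hk'.2.2⟩
    rw [← Finset.card_union_of_disjoint hdisj]
    have h1 : (ML ∪ MH).card ≤ (Finset.Ico b c).card := by
      apply Finset.card_le_card_of_injOn (fun k : Fin ℓ => (k:ℕ))
      · intro k hk
        rw [Finset.mem_coe, Finset.mem_union, hML, hMH, Finset.mem_filter, Finset.mem_filter] at hk
        rcases hk with h | h <;> exact Finset.mem_Ico.mpr ⟨h.2.1, h.2.2.1⟩
      · exact fun x _ y _ h => Fin.val_injective h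
    simpa [Nat.card_Ico] using h1
  show b - A.card + B.card ≤ c - A'.card + B'.card
  omega

end
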